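/- Let d ≥ 2 and let a, b ∈ ℝ^d be vectors whose d-th coordinates satisfy a_d ≤ u and b_d ≤ u for some real number u < 0. Let Pa and Pb be the vectors obtained from a and b by replacing their d-th coordinates with u. If ⟪Pa, Pb⟫ ≥ 0, then ⟪a, b⟫ ≥ ⟪Pa, Pb⟫ ≥ 0; in particular a and b do not have strictly negative inner product. (This is the projection inequality underlying the inductive proofs of the bounds M_d(r) ≤ d + 1 for r > √2 and M_d(√2) ≤ 2d.) -/

import Mathlib

open scoped RealInnerProductSpace

/-- Projection inequality: if the `d`-th coordinates of `a, b ∈ ℝ^d` are at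
most `u < 0`, and `Pa, Pb` are obtained from `a, b` by replacing the `d`-th
coordinate with `u`, then `⟪Pa, Pb⟫ ≥ 0` implies
`⟪a, b⟫ ≥ ⟪Pa, Pb⟫ ≥ 0`; in particular `a` and `b` do not have strictly
negative inner product. -/
theorem projection_inner_ineq (d : ℕ) (hd : 2 ≤ d)
    (i : Fin d) (hi : (i : ℕ) = d - 1)
    (u : ℝ) (hu : u < 0)
    (a b Pa Pb : EuclideanSpace ℝ (Fin d))
    (had : a i ≤ u) (hbd : b i ≤ u)
    (hPa : ∀ j, Pa j = if j = i then u else a j)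
    (hPb : ∀ j, Pb j = if j = i then u else b j)
    (h : 0 ≤ ⟪Pa, Pb⟫) :
    ⟪Pa, Pb⟫ ≤ ⟪a, b⟫ ∧ 0 ≤ ⟪a, b⟫ ∧ ¬ ⟪a, b⟫ < 0 := by
  have key : ⟪a, b⟫ = ⟪Pa, Pb⟫ + (a i * b i - u * u) := by
    simp only [PiLp.inner_apply, RCLike.inner_apply, conj_trivial]
    rw [Finset.sum_congr rfl fun j _ => mul_comm (b j) (a j),
      Finset.sum_congr rfl fun j _ => mul_comm (Pb j) (Pa j)]
    have : ∀ j : Fin d, a j * b j =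
        Pa j * Pb j + if j = i then a i * b i - u * u else 0 := by
      intro j
      rw [hPa, hPb]
      by_cases hj : j = i <;> simp [hj] <;> subst hj <;> ring
    rw [Finset.sum_congr rfl fun j _ => this j, Finset.sum_add_distrib,
      Finset.sum_ite_eq' Finset.univ i]
    simp
  have hprod : u * u ≤ a i * b i := by nlinarith
  have h1 : ⟪Pa, Pb⟫ ≤ ⟪a, b⟫ := by rw [key]; linarith
  exact ⟨h1, by linarith, by push_neg; linarith⟩
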